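/- Let X be a topological space with θⁿ-Uc(X) ≤ κ (every θⁿ-Urysohn cellular family of open sets has cardinality ≤ κ), and let {U_α}_{α∈A} be a family of open subsets of X. Then there exists B ⊆ A with |B| ≤ κ such that ⋃_{α∈A} U_α ⊆ cl_γⁿ(⋃_{β∈B} cl_θⁿ(U_β)). -/
import Mathlib


open Set Topology Cardinal

universe u v

def thetaCl (X : Type u) [TopologicalSpace X] (A : Set X) : Set X :=
  {x | ∀ U : Set X, IsOpen U → x ∈ U → (closure U ∩ A).Nonempty}

def thetaClN (X : Type u) [TopologicalSpace X] (n : ℕ) (A : Set X) : Set X :=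
  (thetaCl X)^[n] A

def gammaCl (X : Type u) [TopologicalSpace X] (n : ℕ) (A : Set X) : Set X :=
  {x | ∀ U : Set X, IsOpen U → x ∈ U → (thetaClN X n U ∩ A).Nonempty}

def ThetaUrysohn (X : Type u) [TopologicalSpace X] (n : ℕ) : Prop :=
  ∀ x y : X, x ≠ y → ∃ U V : Set X, IsOpen U ∧ IsOpen V ∧ x ∈ U ∧ y ∈ V ∧
    thetaClN X n U ∩ thetaClN X n V = ∅

lemma thetaCl_mono' {X : Type u} [TopologicalSpace X] {A B : Set X} (h : A ⊆ B) :
    thetaCl X A ⊆ thetaCl X B := fun x hx W hWo hxW =>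
  (hx W hWo hxW).imp fun y hy => ⟨hy.1, h hy.2⟩

lemma subset_thetaCl' {X : Type u} [TopologicalSpace X] (A : Set X) :
    A ⊆ thetaCl X A := fun x hx W hWo hxW => ⟨x, subset_closure hxW, hx⟩

lemma thetaClN_mono' {X : Type u} [TopologicalSpace X] (n : ℕ) {A B : Set X} (h : A ⊆ B) :
    thetaClN X n A ⊆ thetaClN X n B := by
  induction n generalizing A B with
  | zero => exact h
  | succ m ih =>
    simp only [thetaClN, Function.iterate_succ_apply] at *
    exact ih (thetaCl_mono' h)

lemma subset_thetaClN' {X : Type u} [TopologicalSpace X] (n : ℕ) (A : Set X) :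
    A ⊆ thetaClN X n A := by
  induction n generalizing A with
  | zero => exact subset_rfl
  | succ m ih =>
    simp only [thetaClN, Function.iterate_succ_apply] at *
    exact (subset_thetaCl' A).trans (ih (thetaCl X A))

theorem exists_subfamily_gammaCl (X : Type u) [TopologicalSpace X] (n : ℕ)
    (κ : Cardinal.{u}) (hκ : ℵ₀ ≤ κ)
    (hUc : ∀ V : Set (Set X), (∀ U ∈ V, IsOpen U) →
      (∀ U₁ ∈ V, ∀ U₂ ∈ V, U₁ ≠ U₂ → thetaClN X n U₁ ∩ thetaClN X n U₂ = ∅) →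
      #V ≤ κ)
    {ι : Type u} (U : ι → Set X) (hU : ∀ i, IsOpen (U i)) :
    ∃ B : Set ι, #B ≤ κ ∧
      (⋃ i, U i) ⊆ gammaCl X n (⋃ i ∈ B, thetaClN X n (U i)) := by
  classical
  set S : Set (Set (Set X)) :=
    {V | (∀ W ∈ V, IsOpen W ∧ W.Nonempty ∧ ∃ i, W ⊆ U i) ∧
      ∀ W₁ ∈ V, ∀ W₂ ∈ V, W₁ ≠ W₂ → thetaClN X n W₁ ∩ thetaClN X n W₂ = ∅} with hSdef
  obtain ⟨V, hVmax⟩ := zorn_subset S (by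
    intro c hcS hchain
    refine ⟨⋃₀ c, ⟨?_, ?_⟩, fun s hs => subset_sUnion_of_mem hs⟩
    · rintro W ⟨A, hAc, hWA⟩
      exact (hcS hAc).1 W hWA
    · rintro W₁ ⟨A, hAc, hW₁⟩ W₂ ⟨A', hA'c, hW₂⟩ hne
      rcases hchain.total hAc hA'c with h | h
      · exact (hcS hA'c).2 W₁ (h hW₁) W₂ hW₂ hne
      · exact (hcS hAc).2 W₁ hW₁ W₂ (h hW₂) hne)
  have hVS : V ∈ S := hVmax.1
  have hwit : ∀ W : V, ∃ i, (W : Set X) ⊆ U i := fun W => (hVS.1 W W.2).2.2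
  set g : V → ι := fun W => (hwit W).choose with hg
  have hgspec : ∀ W : V, (W : Set X) ⊆ U (g W) := fun W => (hwit W).choose_spec
  refine ⟨Set.range g, ?_, ?_⟩
  · exact (Cardinal.mk_range_le).trans
      (hUc V (fun W hW => (hVS.1 W hW).1) hVS.2)
  · intro x hx
    obtain ⟨j, hxj⟩ := mem_iUnion.mp hx
    intro W hWo hxW
    by_contra hempty
    rw [Set.not_nonempty_iff_eq_empty] at hempty
    set W' : Set X := W ∩ U j with hW'
    have hW'o : IsOpen W' := hWo.inter (hU j)
    have hxW' : x ∈ W' := ⟨hxW, hxj⟩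
    -- W' is θⁿ-disjoint from every member of V
    have hdisj : ∀ V₀ ∈ V, thetaClN X n W' ∩ thetaClN X n V₀ = ∅ := by
      intro V₀ hV₀
      apply Set.eq_empty_iff_forall_notMem.mpr
      rintro y ⟨hy1, hy2⟩
      have hy1' : y ∈ thetaClN X n W := thetaClN_mono' n inter_subset_left hy1
      have hy2' : y ∈ ⋃ i ∈ Set.range g, thetaClN X n (U i) := by
        refine Set.mem_biUnion ⟨⟨V₀, hV₀⟩, rfl⟩ ?_
        exact thetaClN_mono' n (hgspec ⟨V₀, hV₀⟩) hy2
      exact absurd (Set.eq_empty_iff_forall_notMem.mp hempty y ⟨hy1', hy2'⟩) (fun h => h)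
    have hW'notin : W' ∉ V := by
      intro hmem
      have h1 : x ∈ thetaClN X n W' := subset_thetaClN' n W' hxW'
      have h2 : x ∈ ⋃ i ∈ Set.range g, thetaClN X n (U i) := by
        refine Set.mem_biUnion ⟨⟨W', hmem⟩, rfl⟩ ?_
        exact thetaClN_mono' n (hgspec ⟨W', hmem⟩) h1
      have h1' : x ∈ thetaClN X n W := thetaClN_mono' n inter_subset_left h1
      exact Set.eq_empty_iff_forall_notMem.mp hempty x ⟨h1', h2⟩
    -- insert W' V is in S, contradicting maximality
    have hins : insert W' V ∈ S := by
      constructor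
      · rintro W₀ (rfl | hW₀)
        · exact ⟨hW'o, ⟨x, hxW'⟩, j, inter_subset_right⟩
        · exact hVS.1 W₀ hW₀
      · rintro W₁ (rfl | hW₁) W₂ (rfl | hW₂) hne
        · exact absurd rfl hne
        · exact hdisj W₂ hW₂
        · rw [Set.inter_comm]; exact hdisj W₁ hW₁
        · exact hVS.2 W₁ hW₁ W₂ hW₂ hne
    have := hVmax.2 hins (subset_insert W' V)
    exact hW'notin (this (mem_insert W' V))
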